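/- There exists a family of directed graphs G_n on Θ(n) vertices with two distinguished vertices s and t such that s and t are connected by a balanced walk, but every balanced walk from s to t has length Θ(n²); in particular the shortest balanced walk is not simple. -/

import Mathlib

variable {V : Type*}

open Classical in
/-- The balance (number of forward edges minus number of backward edges) of a walk,
given as its list of vertices, in the underlying undirected graph of the digraph `E`. -/
noncomputable def bal (E : V → V → Prop) : List V → ℤ
  | u :: v :: r =>
      (if E u v ∧ ¬ E v u then 1 else if E v u ∧ ¬ E u v then -1 else 0) + bal E (v :: r)
  | _ => 0

/-- `p` is a walk from `s` to `t` in the underlying undirected graph of the digraph `E`. -/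
def IsWalk (E : V → V → Prop) (s t : V) (p : List V) : Prop :=
  p.head? = some s ∧ p.getLast? = some t ∧ p.Chain' (fun u v => E u v ∨ E v u)

open Classical in
noncomputable def wt (E : V → V → Prop) (u v : V) : ℤ :=
  if E u v ∧ ¬ E v u then 1 else if E v u ∧ ¬ E u v then -1 else 0

lemma bal_cons (E : V → V → Prop) (u v : V) (r : List V) :
    bal E (u :: v :: r) = wt E u v + bal E (v :: r) := rfl

lemma bal_single (E : V → V → Prop) (v : V) : bal E [v] = 0 := rfl

lemma wt_pos {E : V → V → Prop} {u v : V} (h1 : E u v) (h2 : ¬ E v u) : wt E u v = 1 := by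
  unfold wt; rw [if_pos ⟨h1, h2⟩]

lemma wt_neg {E : V → V → Prop} {u v : V} (h1 : ¬ E u v) (h2 : E v u) : wt E u v = -1 := by
  unfold wt; rw [if_neg (by tauto), if_pos ⟨h2, h1⟩]

lemma wt_zero {E : V → V → Prop} {u v : V} (h1 : E u v) (h2 : E v u) : wt E u v = 0 := by
  unfold wt; rw [if_neg (by tauto), if_neg (by tauto)]

lemma key_abs (E : V → V → Prop) (Φ : V → ℤ) (m : ℤ)
    (h : ∀ u v, (E u v ∨ E v u) → |m * wt E u v - (Φ v - Φ u)| ≤ 1) :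
    ∀ (p : List V) (a b : V), p.head? = some a → p.getLast? = some b →
      p.Chain' (fun u v => E u v ∨ E v u) →
      |m * bal E p - (Φ b - Φ a)| ≤ (p.length : ℤ) - 1 := by
  intro p
  induction p with
  | nil => intro a b ha; simp at ha
  | cons x q ih =>
    intro a b ha hb hc
    simp only [List.head?_cons, Option.some.injEq] at ha
    subst ha
    match q, ih with
    | [], _ =>
      simp only [List.getLast?_singleton, Option.some.injEq] at hb
      subst hb
      simp [bal_single]
    | y :: r, ih =>
      have hb' : (y :: r).getLast? = some b := by
        rwa [List.getLast?_cons_cons] at hb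
      unfold List.Chain' at hc; rw [List.isChain_cons_cons] at hc
      have h1 := h x y hc.1
      have h2 := ih y b rfl hb' hc.2
      rw [bal_cons]
      have : m * (wt E x y + bal E (y :: r)) - (Φ b - Φ x)
          = (m * wt E x y - (Φ y - Φ x)) + (m * bal E (y :: r) - (Φ b - Φ y)) := by ring
      rw [this]
      calc |_| ≤ |m * wt E x y - (Φ y - Φ x)| + |m * bal E (y :: r) - (Φ b - Φ y)| :=
            abs_add_le _ _
        _ ≤ 1 + (((y :: r).length : ℤ) - 1) := add_le_add h1 h2
        _ ≤ _ := by simp [List.length_cons]; ring_nf; simp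

lemma bal_range (E : V → V → Prop) :
    ∀ (m : ℕ) (f : ℕ → V) (G : ℕ → ℤ),
      (∀ k < m, wt E (f k) (f (k+1)) = G (k+1) - G k) →
      bal E ((List.range (m+1)).map f) = G m - G 0 := by
  intro m
  induction m with
  | zero => intro f G _; rw [show List.range 1 = [0] from rfl, List.map_singleton, bal_single]; ring
  | succ m ih =>
    intro f G h
    have h1 : (List.range (m+2)).map f
        = f 0 :: (List.range (m+1)).map (fun k => f (k+1)) := by
      rw [List.range_succ_eq_map, List.map_cons, List.map_map]
      rfl
    have h2 : (List.range (m+1)).map (fun k => f (k+1))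
        = f 1 :: (List.range m).map (fun k => f (k+2)) := by
      rw [List.range_succ_eq_map, List.map_cons, List.map_map]
      rfl
    have ihx := ih (fun k => f (k+1)) (fun k => G (k+1))
      (fun k hk => h (k+1) (by omega))
    rw [h2] at ihx
    rw [h1, h2, bal_cons, ihx, h 0 (by omega)]
    ring

lemma chain_range (E : V → V → Prop) (m : ℕ) (f : ℕ → V)
    (h : ∀ k < m, E (f k) (f (k+1)) ∨ E (f (k+1)) (f k)) :
    ((List.range (m+1)).map f).Chain' (fun u v => E u v ∨ E v u) := by
  unfold List.Chain'; rw [List.isChain_map, List.isChain_range_succ]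
  exact h

lemma head_range (m : ℕ) (f : ℕ → V) : ((List.range (m+1)).map f).head? = some (f 0) := by
  rw [List.range_succ_eq_map, List.map_cons]; rfl

lemma last_range (m : ℕ) (f : ℕ → V) : ((List.range (m+1)).map f).getLast? = some (f m) := by
  rw [List.range_succ, List.map_append]
  simp

def Efam (n : ℕ) : (Fin (n+1) ⊕ Fin (n-1)) → (Fin (n+1) ⊕ Fin (n-1)) → Prop
  | Sum.inl i, Sum.inl j => (j : ℕ) = (i : ℕ) + 1
  | Sum.inl i, Sum.inr j => (i : ℕ) = 0 ∧ ((j : ℕ) = 0 ∨ (j : ℕ) = n - 2)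
  | Sum.inr j, Sum.inl i => (i : ℕ) = 0 ∧ (j : ℕ) = n - 2
  | Sum.inr j, Sum.inr k => (k : ℕ) = (j : ℕ) + 1 ∨ (j : ℕ) = (k : ℕ) + 1

def Phi (n : ℕ) : (Fin (n+1) ⊕ Fin (n-1)) → ℤ
  | Sum.inl i => (n : ℤ) * (i : ℕ)
  | Sum.inr j => (n : ℤ) - 1 - (j : ℕ)

lemma edge_bound {n : ℕ} (hn : 3 ≤ n) (u v : Fin (n+1) ⊕ Fin (n-1))
    (h : Efam n u v ∨ Efam n v u) :
    |(n : ℤ) * wt (Efam n) u v - (Phi n v - Phi n u)| ≤ 1 := by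
  obtain i | i := u <;> obtain j | j := v
  · -- inl inl
    simp only [Efam] at h
    rcases h with h | h
    · have hw : wt (Efam n) (Sum.inl i : Fin (n+1) ⊕ Fin (n-1)) (Sum.inl j) = 1 :=
        wt_pos (by simpa [Efam] using h) (by simp [Efam]; omega)
      rw [hw]
      have : (Phi n (Sum.inl j : Fin (n+1) ⊕ Fin (n-1)) - Phi n (Sum.inl i)) = (n : ℤ) := by
        simp only [Phi, h]; push_cast; ring
      rw [this]; simp
    · have hw : wt (Efam n) (Sum.inl i : Fin (n+1) ⊕ Fin (n-1)) (Sum.inl j) = -1 :=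
        wt_neg (by simp [Efam]; omega) (by simpa [Efam] using h)
      rw [hw]
      have : (Phi n (Sum.inl j : Fin (n+1) ⊕ Fin (n-1)) - Phi n (Sum.inl i)) = -(n : ℤ) := by
        simp only [Phi, h]; push_cast; ring
      rw [this]; simp
  · -- inl inr
    have hij : (i : ℕ) = 0 ∧ ((j : ℕ) = 0 ∨ (j : ℕ) = n - 2) := by
      simp only [Efam] at h; tauto
    obtain ⟨hi, hj⟩ := hij
    rcases hj with hj | hj
    · have hw : wt (Efam n) (Sum.inl i : Fin (n+1) ⊕ Fin (n-1)) (Sum.inr j) = 1 :=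
        wt_pos (by simp [Efam, hi, hj]) (by simp [Efam]; omega)
      rw [hw]
      have : (Phi n (Sum.inr j : Fin (n+1) ⊕ Fin (n-1)) - Phi n (Sum.inl i)) = (n : ℤ) - 1 := by
        simp only [Phi, hi, hj]; push_cast; ring
      rw [this]; simp
    · have hw : wt (Efam n) (Sum.inl i : Fin (n+1) ⊕ Fin (n-1)) (Sum.inr j) = 0 :=
        wt_zero (by simp [Efam, hi, hj]) (by simp [Efam, hi, hj])
      rw [hw]
      have : (Phi n (Sum.inr j : Fin (n+1) ⊕ Fin (n-1)) - Phi n (Sum.inl i)) = 1 := by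
        simp only [Phi, hi, hj]; push_cast; omega
      rw [this]; simp
  · -- inr inl
    have hij : (j : ℕ) = 0 ∧ ((i : ℕ) = 0 ∨ (i : ℕ) = n - 2) := by
      simp only [Efam] at h; tauto
    obtain ⟨hj, hi⟩ := hij
    rcases hi with hi | hi
    · have hw : wt (Efam n) (Sum.inr i : Fin (n+1) ⊕ Fin (n-1)) (Sum.inl j) = -1 :=
        wt_neg (by simp [Efam]; omega) (by simp [Efam, hi, hj])
      rw [hw]
      have : (Phi n (Sum.inl j : Fin (n+1) ⊕ Fin (n-1)) - Phi n (Sum.inr i)) = 1 - (n : ℤ) := by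
        simp only [Phi, hi, hj]; push_cast; ring
      rw [this]; simp; ring_nf; simp
    · have hw : wt (Efam n) (Sum.inr i : Fin (n+1) ⊕ Fin (n-1)) (Sum.inl j) = 0 :=
        wt_zero (by simp [Efam, hi, hj]) (by simp [Efam, hi, hj])
      rw [hw]
      have : (Phi n (Sum.inl j : Fin (n+1) ⊕ Fin (n-1)) - Phi n (Sum.inr i)) = -1 := by
        simp only [Phi, hi, hj]; push_cast; omega
      rw [this]; simp
  · -- inr inr
    have hs : Efam n (Sum.inr i : Fin (n+1) ⊕ Fin (n-1)) (Sum.inr j) := by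
      simp only [Efam] at h ⊢; tauto
    have hs' : Efam n (Sum.inr j : Fin (n+1) ⊕ Fin (n-1)) (Sum.inr i) := by
      simp only [Efam] at h ⊢; tauto
    rw [wt_zero hs hs']
    have : |Phi n (Sum.inr i : Fin (n+1) ⊕ Fin (n-1)) - Phi n (Sum.inr j)| ≤ 1 := by
      simp only [Efam] at hs
      simp only [Phi]
      rw [abs_le]; constructor <;> push_cast <;> omega
    simpa using this

def fW (n k : ℕ) : Fin (n+1) ⊕ Fin (n-1) :=
  if h : 3 ≤ n ∧ k < n * n then
    (if h2 : k % n = 0 then Sum.inl 0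
     else Sum.inr ⟨n - 1 - k % n, by
       have h1 : k % n < n := Nat.mod_lt _ (by omega)
       omega⟩)
  else Sum.inl ⟨min (k - n * n) n, by omega⟩

def GW (n k : ℕ) : ℤ := if k < n * n then -((k / n : ℕ) : ℤ) else ((k : ℤ) - (n * n : ℕ)) - n

lemma fW_zero {n k : ℕ} (hn : 3 ≤ n) (hk : k < n * n) (hb : k % n = 0) :
    fW n k = Sum.inl 0 := by
  rw [fW, dif_pos ⟨hn, hk⟩, dif_pos hb]

lemma fW_mid {n k : ℕ} (hn : 3 ≤ n) (hk : k < n * n) (hb : k % n ≠ 0) :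
    fW n k = Sum.inr ⟨n - 1 - k % n, by
      have h1 : k % n < n := Nat.mod_lt _ (by omega); omega⟩ := by
  rw [fW, dif_pos ⟨hn, hk⟩, dif_neg hb]

lemma fW_top {n k : ℕ} (hn : 3 ≤ n) (hk : n * n ≤ k) (hk2 : k ≤ n * n + n) :
    fW n k = Sum.inl ⟨k - n * n, by omega⟩ := by
  rw [fW, dif_neg (by omega)]
  congr 1
  ext
  simp only []
  omega

lemma div_eval {n a b : ℕ} (hn : 0 < n) (hb : b < n) : (n * a + b) / n = a := by
  rw [Nat.mul_add_div hn, Nat.div_eq_of_lt hb, Nat.add_zero]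

lemma mod_eval {n a b : ℕ} (hb : b < n) : (n * a + b) % n = b := by
  rw [Nat.mul_add_mod, Nat.mod_eq_of_lt hb]

lemma fW_mid' {n k c : ℕ} (hn : 3 ≤ n) (hk : k < n * n) (hb : k % n ≠ 0)
    (hc : c = n - 1 - k % n) (hcl : c < n - 1) : fW n k = Sum.inr ⟨c, hcl⟩ := by
  rw [fW_mid hn hk hb]
  congr 1
  exact Fin.ext hc.symm

lemma fW_top' {n k c : ℕ} (hn : 3 ≤ n) (hk : n * n ≤ k) (hk2 : k ≤ n * n + n)
    (hc : c = k - n * n) (hcl : c < n + 1) : fW n k = Sum.inl ⟨c, hcl⟩ := by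
  rw [fW_top hn hk hk2]
  congr 1
  exact Fin.ext hc.symm

lemma fW_nn {n : ℕ} (hn : 3 ≤ n) : fW n (n * n) = Sum.inl 0 := by
  rw [fW_top' hn le_rfl (by omega) (c := 0) (by omega) (by omega)]
  congr 1
  all_goals exact Fin.ext (by simp)

lemma step_eval {n : ℕ} (hn : 3 ≤ n) {k : ℕ} (hk : k < n * n + n) :
    (Efam n (fW n k) (fW n (k+1)) ∨ Efam n (fW n (k+1)) (fW n k)) ∧
    wt (Efam n) (fW n k) (fW n (k+1)) = GW n (k+1) - GW n k := by
  by_cases hk1 : k < n * n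
  · obtain ⟨a, b, hab, hbn⟩ : ∃ a b, k = n * a + b ∧ b < n :=
      ⟨k / n, k % n, (Nat.div_add_mod k n).symm, Nat.mod_lt _ (by omega)⟩
    have hmod : k % n = b := by rw [hab, mod_eval hbn]
    have hdiv : k / n = a := by rw [hab, div_eval (by omega) hbn]
    have hGk : GW n k = -(a : ℤ) := by rw [GW, if_pos hk1, hdiv]
    rcases Nat.lt_or_ge b (n - 1) with hb1 | hb1
    · -- b ≤ n - 2 : the step stays inside the cycle, weight 0
      have hm1 : (k + 1) % n = b + 1 := by
        rw [show k + 1 = n * a + (b + 1) by omega, mod_eval (by omega)]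
      have hd1 : (k + 1) / n = a := by
        rw [show k + 1 = n * a + (b + 1) by omega, div_eval (by omega) (by omega)]
      have hk2 : k + 1 < n * n := by
        rcases Nat.lt_or_ge (k + 1) (n * n) with h | h
        · exact h
        · exfalso
          have he : k + 1 = n * n := by omega
          have h0 : (k + 1) % n = 0 := by rw [he, Nat.mul_mod_left]
          omega
      have hGk1 : GW n (k + 1) = -(a : ℤ) := by rw [GW, if_pos hk2, hd1]
      by_cases hb0 : b = 0
      · -- step from s into the cycle (bidirectional edge), weight 0
        have fk : fW n k = Sum.inl 0 := fW_zero hn hk1 (by omega)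
        have fk1 : fW n (k + 1) = Sum.inr ⟨n - 2, by omega⟩ :=
          fW_mid' hn hk2 (by omega) (by omega) (by omega)
        rw [fk, fk1, hGk, hGk1]
        have e1 : Efam n (Sum.inl 0 : Fin (n+1) ⊕ Fin (n-1)) (Sum.inr ⟨n - 2, by omega⟩) := by
          simp only [Efam]
          exact ⟨by simp, Or.inr trivial⟩
        have e2 : Efam n (Sum.inr ⟨n - 2, by omega⟩ : Fin (n+1) ⊕ Fin (n-1)) (Sum.inl 0) := by
          simp only [Efam]
          exact ⟨by simp, trivial⟩
        exact ⟨Or.inl e1, by rw [wt_zero e1 e2]; ring⟩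
      · -- step within the cycle, weight 0
        have fk : fW n k = Sum.inr ⟨n - 1 - b, by omega⟩ :=
          fW_mid' hn hk1 (by omega) (by omega) (by omega)
        have fk1 : fW n (k + 1) = Sum.inr ⟨n - 2 - b, by omega⟩ :=
          fW_mid' hn hk2 (by omega) (by omega) (by omega)
        rw [fk, fk1, hGk, hGk1]
        have e1 : Efam n (Sum.inr ⟨n - 1 - b, by omega⟩ : Fin (n+1) ⊕ Fin (n-1))
            (Sum.inr ⟨n - 2 - b, by omega⟩) := by
          simp only [Efam]
          right
          omega
        have e2 : Efam n (Sum.inr ⟨n - 2 - b, by omega⟩ : Fin (n+1) ⊕ Fin (n-1))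
            (Sum.inr ⟨n - 1 - b, by omega⟩) := by
          simp only [Efam]
          left
          omega
        exact ⟨Or.inl e1, by rw [wt_zero e1 e2]; ring⟩
    · -- b = n - 1 : crossing the special directed edge backwards, weight -1
      have hb' : b = n - 1 := by omega
      have hx : n * (a + 1) = n * a + n := by ring
      have hm1 : (k + 1) % n = 0 := by
        rw [show k + 1 = n * (a + 1) + 0 by omega, mod_eval (by omega)]
      have hd1 : (k + 1) / n = a + 1 := by
        rw [show k + 1 = n * (a + 1) + 0 by omega, div_eval (by omega) (by omega)]
      have fk : fW n k = Sum.inr ⟨0, by omega⟩ :=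
        fW_mid' hn hk1 (by omega) (by omega) (by omega)
      have fk1 : fW n (k + 1) = Sum.inl 0 := by
        rcases Nat.lt_or_ge (k + 1) (n * n) with h | h
        · exact fW_zero hn h hm1
        · have he : k + 1 = n * n := by omega
          rw [he]
          exact fW_nn hn
      have hGk1 : GW n (k + 1) = -((a : ℤ) + 1) := by
        rcases Nat.lt_or_ge (k + 1) (n * n) with h | h
        · rw [GW, if_pos h, hd1]; push_cast; ring
        · have he : k + 1 = n * n := by omega
          have han : a + 1 = n := by
            have := Nat.eq_of_mul_eq_mul_left (show 0 < n by omega)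
              (show n * (a + 1) = n * n by omega)
            omega
          rw [GW, if_neg (by omega), he]
          push_cast
          omega
      rw [fk, fk1, hGk, hGk1]
      have e1 : Efam n (Sum.inl 0 : Fin (n+1) ⊕ Fin (n-1)) (Sum.inr ⟨0, by omega⟩) := by
        simp only [Efam]
        exact ⟨by simp, Or.inl trivial⟩
      have e2 : ¬ Efam n (Sum.inr ⟨0, by omega⟩ : Fin (n+1) ⊕ Fin (n-1)) (Sum.inl 0) := by
        simp only [Efam]
        intro hcon
        have := hcon.2
        omega
      exact ⟨Or.inr e1, by rw [wt_neg e2 e1]; ring⟩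
  · -- on the directed path towards t, weight +1
    have fk : fW n k = Sum.inl ⟨k - n * n, by omega⟩ :=
      fW_top' hn (by omega) (by omega) rfl (by omega)
    have fk1 : fW n (k + 1) = Sum.inl ⟨k + 1 - n * n, by omega⟩ :=
      fW_top' hn (by omega) (by omega) rfl (by omega)
    rw [fk, fk1]
    have e1 : Efam n (Sum.inl ⟨k - n * n, by omega⟩ : Fin (n+1) ⊕ Fin (n-1))
        (Sum.inl ⟨k + 1 - n * n, by omega⟩) := by
      simp only [Efam]
      omega
    have e2 : ¬ Efam n (Sum.inl ⟨k + 1 - n * n, by omega⟩ : Fin (n+1) ⊕ Fin (n-1))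
        (Sum.inl ⟨k - n * n, by omega⟩) := by
      simp only [Efam]
      omega
    refine ⟨Or.inl e1, ?_⟩
    rw [wt_pos e1 e2, GW, GW, if_neg (by omega), if_neg (by omega)]
    push_cast
    omega

/-- A family of digraphs on Θ(n) vertices in which `s` and `t` are joined by a balanced
walk, but every balanced walk from `s` to `t` has length Θ(n²) (and is thus not simple). -/
theorem exists_family_balanced_walk_quadratic :
    ∃ (W : ℕ → Type) (_ : ∀ n, Fintype (W n)) (E : ∀ n, W n → W n → Prop)
      (s t : ∀ n, W n) (c N : ℕ), 0 < c ∧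
      ∀ n : ℕ, N ≤ n →
        (Fintype.card (W n) ≤ c * n ∧ n ≤ c * Fintype.card (W n)) ∧
        (∃ p : List (W n), IsWalk (E n) (s n) (t n) p ∧ bal (E n) p = 0 ∧
          p.length ≤ c * n ^ 2) ∧
        (∀ p : List (W n), IsWalk (E n) (s n) (t n) p → bal (E n) p = 0 →
          n ^ 2 ≤ c * p.length ∧ ¬ p.Nodup) := by
  refine ⟨fun n => Fin (n+1) ⊕ Fin (n-1), fun n => inferInstance, Efam,
    fun n => Sum.inl 0, fun n => Sum.inl (Fin.last n), 2, 3, by norm_num, ?_⟩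
  intro n hn
  beta_reduce
  have hcard : Fintype.card (Fin (n+1) ⊕ Fin (n-1)) = (n+1) + (n-1) := by simp
  have h3n : 3 * n ≤ n * n := Nat.mul_le_mul_right n hn
  refine ⟨⟨by omega, by omega⟩, ?_, ?_⟩
  · -- existence of a short balanced walk
    refine ⟨(List.range (n * n + n + 1)).map (fW n), ⟨?_, ?_, ?_⟩, ?_, ?_⟩
    · rw [head_range, fW_zero hn (by omega) (Nat.zero_mod n)]
    · rw [last_range, fW_top' hn (by omega) (by omega) (c := n) (by omega) (by omega)]
      rfl
    · exact chain_range _ _ _ (fun k hk => (step_eval hn hk).1)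
    · rw [bal_range (Efam n) (n * n + n) (fW n) (GW n) (fun k hk => (step_eval hn hk).2)]
      rw [GW, GW, if_neg (by omega), if_pos (by omega)]
      push_cast [Nat.zero_div]
      ring
    · rw [List.length_map, List.length_range]
      have : n * n + n + 1 ≤ 2 * (n * n) := by omega
      calc n * n + n + 1 ≤ 2 * (n * n) := this
        _ = 2 * n ^ 2 := by ring
  · -- every balanced walk is long and non-simple
    intro p hw hbal
    obtain ⟨hh, hl, hc⟩ := hw
    have hK := key_abs (Efam n) (Phi n) n (edge_bound hn) p _ _ hh hl hc
    rw [hbal] at hK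
    have hPs : Phi n (Sum.inl 0 : Fin (n+1) ⊕ Fin (n-1)) = 0 := by
      simp [Phi]
    have hPt : Phi n (Sum.inl (Fin.last n) : Fin (n+1) ⊕ Fin (n-1)) = (n : ℤ) * n := by
      simp [Phi]
    rw [hPs, hPt] at hK
    have hlen : n * n + 1 ≤ p.length := by
      have h1 : ((n : ℤ) * n) ≤ (p.length : ℤ) - 1 := by
        have := abs_le.mp hK
        have h2 := this.1
        push_cast at h2 ⊢
        linarith
      have : ((n * n : ℕ) : ℤ) + 1 ≤ (p.length : ℤ) := by push_cast; linarith
      exact_mod_cast this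
    constructor
    · have : n ^ 2 = n * n := by ring
      omega
    · intro hnd
      have hle := hnd.length_le_card
      rw [hcard] at hle
      omega
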